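/- Let G be a Hausdorff topological group in which every proper open subgroup is compact. Let H be a closed subgroup of G that is neither compact nor equal to G, and let K be a compact open subgroup of G. Then H ∩ K has infinite index in K. -/

import Mathlib

/-- Lemma 4.1 of the paper (`lem::infinit_index`), abstract form: in a Hausdorff
topological group in which every proper open subgroup is compact, the intersection of a
closed, non-compact, proper subgroup `H` with a compact open subgroup `K` has infinite
index in `K`. -/
theorem stmt_6 {G : Type*} [Group G] [TopologicalSpace G] [IsTopologicalGroup G] [T2Space G]
    (hopen : ∀ U : Subgroup G, IsOpen (U : Set G) → U ≠ ⊤ → IsCompact (U : Set G))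
    (H : Subgroup G) (hHclosed : IsClosed (H : Set G))
    (hHnoncompact : ¬ IsCompact (H : Set G)) (hHproper : H ≠ ⊤)
    (K : Subgroup G) (hKcompact : IsCompact (K : Set G)) (hKopen : IsOpen (K : Set G)) :
    Infinite (↥K ⧸ (H ⊓ K).subgroupOf K) := by
  by_contra hinf
  rw [not_infinite_iff_finite] at hinf
  haveI : ((H ⊓ K).subgroupOf K).FiniteIndex :=
    Subgroup.finiteIndex_of_finite_quotient
  -- (H ⊓ K).subgroupOf K is closed in K
  have hclosed : IsClosed ((((H ⊓ K).subgroupOf K) : Subgroup K) : Set K) := by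
    have : (((H ⊓ K).subgroupOf K : Subgroup K) : Set K) =
        Subtype.val ⁻¹' (H : Set G) := by
      ext x
      simp [Subgroup.mem_subgroupOf, Subgroup.mem_inf, x.2]
    rw [this]
    exact hHclosed.preimage continuous_subtype_val
  haveI : ((H ⊓ K).subgroupOf K).FiniteIndex := inferInstance
  have hopenK : IsOpen ((((H ⊓ K).subgroupOf K) : Subgroup K) : Set K) :=
    Subgroup.isOpen_of_isClosed_of_finiteIndex _ hclosed
  -- hence H ⊓ K is open in G
  have hHKopen : IsOpen ((H ⊓ K : Subgroup G) : Set G) := by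
    have hemb := hKopen.isOpenEmbedding_subtypeVal
    have himg : Subtype.val '' ((((H ⊓ K).subgroupOf K) : Subgroup K) : Set K)
        = ((H ⊓ K : Subgroup G) : Set G) := by
      ext x
      constructor
      · rintro ⟨y, hy, rfl⟩
        exact ⟨(Subgroup.mem_subgroupOf.mp hy).1, y.2⟩
      · rintro ⟨hxH, hxK⟩
        exact ⟨⟨x, hxK⟩, Subgroup.mem_subgroupOf.mpr ⟨hxH, hxK⟩, rfl⟩
    rw [← himg]
    exact hemb.isOpenMap _ hopenK
  have hHopen : IsOpen (H : Set G) := Subgroup.isOpen_mono inf_le_left hHKopen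
  exact hHnoncompact (hopen H hHopen hHproper)
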